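/- Stability implies balancing for rank-1 approximation: let A ∈ ℝ^{n×n} be diagonal non-negative with distinct positive maximal value μ_max. If (x,y) is a global minimizer of ‖A - xyᵀ‖_F²/2 that is a linearly stable fixed point of GD with step h > 0 (all Jacobian eigenvalues have modulus ≤ 1), then ‖x‖² + ‖y‖² ≤ 2/h, and hence ‖x - y‖² ≤ 2/h - 2μ_max. -/

import Mathlib

open Matrix Polynomial BigOperators

/-- The Jacobian of the GD map `ψ(x,y) = (x + h(A - xyᵀ)y, y + h(Aᵀ - yxᵀ)x)`
at `(x,y)` for `A = diag d`. -/
noncomputable def gdJacobian {n : ℕ} (d : Fin n → ℝ) (h : ℝ) (x y : Fin n → ℝ) :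
    Matrix (Fin n ⊕ Fin n) (Fin n ⊕ Fin n) ℝ :=
  1 + Matrix.fromBlocks
    ((-(h * ∑ i, y i ^ 2)) • (1 : Matrix (Fin n) (Fin n) ℝ))
    (h • Matrix.diagonal d - (2 * h) • Matrix.vecMulVec x y)
    (h • (Matrix.diagonal d)ᵀ - (2 * h) • Matrix.vecMulVec y x)
    ((-(h * ∑ i, x i ^ 2)) • (1 : Matrix (Fin n) (Fin n) ℝ))

lemma quad_zero (B C : ℝ) (hC : 0 ≤ C) (h : ∀ t : ℝ, 0 ≤ B * t + C * t ^ 2) : B = 0 := by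
  by_contra hB
  have h2 : (0:ℝ) < 2*C+1 := by linarith
  have h1 := h (-B/(2*C+1))
  have key : 0 ≤ (B * (-B/(2*C+1)) + C * (-B/(2*C+1))^2) * (2*C+1)^2 :=
    mul_nonneg h1 (sq_nonneg _)
  have e : (B * (-B/(2*C+1)) + C * (-B/(2*C+1))^2) * (2*C+1)^2 = -(B^2*(C+1)) := by
    field_simp
    ring
  rw [e] at key
  have hB2 : 0 < B^2 := by positivity
  nlinarith

lemma expandA {n : ℕ} (d : Fin n → ℝ) (x y : Fin n → ℝ) (j : Fin n) (t : ℝ) :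
    ∑ i, ∑ k, (Matrix.diagonal d i k - (x i + t * (if i = j then 1 else 0)) * y k)^2
    = (∑ i, ∑ k, (Matrix.diagonal d i k - x i * y k)^2)
      + (2 * (x j * (∑ k, y k ^2) - d j * y j)) * t + (∑ k, y k ^2) * t^2 := by
  have hterm : ∀ i k, (Matrix.diagonal d i k - (x i + t * (if i = j then 1 else 0)) * y k)^2
      = (Matrix.diagonal d i k - x i * y k)^2
        + (if i = j then (2*t*(x j * y k * y k) - 2*t*(Matrix.diagonal d j k * y k) + t^2 * y k^2) else 0) := by
    intro i k
    by_cases hij : i = j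
    · subst hij; rw [if_pos rfl, if_pos rfl]; ring
    · rw [if_neg hij, if_neg hij]; ring
  simp_rw [hterm, Finset.sum_add_distrib]
  have hinner : ∀ i : Fin n, (∑ k, (if i = j then (2*t*(x j * y k * y k) - 2*t*(Matrix.diagonal d j k * y k) + t^2 * y k^2) else 0))
      = (if i = j then (∑ k, (2*t*(x j * y k * y k) - 2*t*(Matrix.diagonal d j k * y k) + t^2 * y k^2)) else 0) := by
    intro i
    split_ifs <;> simp
  simp_rw [hinner]
  rw [Finset.sum_ite_eq' Finset.univ j, if_pos (Finset.mem_univ j)]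
  have hdsum : ∑ k, Matrix.diagonal d j k * y k = d j * y j := by
    simp [Matrix.diagonal, Finset.sum_ite_eq]
  have hxsum : ∑ k, x j * y k * y k = x j * ∑ k, y k ^ 2 := by
    rw [Finset.mul_sum]; exact Finset.sum_congr rfl (fun k _ => by ring)
  have hextra : (∑ k, (2*t*(x j * y k * y k) - 2*t*(Matrix.diagonal d j k * y k) + t^2 * y k ^2))
      = (2 * (x j * (∑ k, y k ^2) - d j * y j)) * t + (∑ k, y k ^2) * t^2 := by
    rw [Finset.sum_add_distrib, Finset.sum_sub_distrib, ← Finset.mul_sum, ← Finset.mul_sum,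
      ← Finset.mul_sum, hdsum, hxsum]
    ring
  rw [hextra]
  ring

lemma expandB {n : ℕ} (d : Fin n → ℝ) (x y : Fin n → ℝ) (j : Fin n) (t : ℝ) :
    ∑ i, ∑ k, (Matrix.diagonal d i k - x i * (y k + t * (if k = j then 1 else 0)))^2
    = (∑ i, ∑ k, (Matrix.diagonal d i k - x i * y k)^2)
      + (2 * (y j * (∑ i, x i ^2) - d j * x j)) * t + (∑ i, x i ^2) * t^2 := by
  have hterm : ∀ i k, (Matrix.diagonal d i k - x i * (y k + t * (if k = j then 1 else 0)))^2
      = (Matrix.diagonal d i k - x i * y k)^2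
        + (if k = j then (2*t*(x i * x i * y j) - 2*t*(Matrix.diagonal d i j * x i) + t^2 * x i^2) else 0) := by
    intro i k
    by_cases hkj : k = j
    · subst hkj; rw [if_pos rfl, if_pos rfl]; ring
    · rw [if_neg hkj, if_neg hkj]; ring
  simp_rw [hterm, Finset.sum_add_distrib, Finset.sum_ite_eq' Finset.univ j,
    if_pos (Finset.mem_univ j)]
  have hdsum : ∑ i, Matrix.diagonal d i j * x i = d j * x j := by
    simp [Matrix.diagonal, Finset.sum_ite_eq']
  have hxsum : ∑ i, x i * x i * y j = (∑ i, x i ^ 2) * y j := by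
    rw [Finset.sum_mul]; exact Finset.sum_congr rfl (fun k _ => by ring)
  have hextra : (∑ i, (2*t*(x i * x i * y j) - 2*t*(Matrix.diagonal d i j * x i) + t^2 * x i ^2))
      = (2 * (y j * (∑ i, x i ^2) - d j * x j)) * t + (∑ i, x i ^2) * t^2 := by
    rw [Finset.sum_add_distrib, Finset.sum_sub_distrib, ← Finset.mul_sum, ← Finset.mul_sum,
      ← Finset.mul_sum, hdsum, hxsum]
    ring
  rw [hextra]
  ring

lemma sumD2 {n : ℕ} (d : Fin n → ℝ) : ∑ i, ∑ k, (Matrix.diagonal d i k)^2 = ∑ i, d i ^2 := by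
  apply Finset.sum_congr rfl
  intro i _
  rw [Finset.sum_eq_single i]
  · simp [Matrix.diagonal]
  · intro k _ hk
    simp [Matrix.diagonal_apply_ne d (Ne.symm hk)]
  · simp

lemma valF {n : ℕ} (d : Fin n → ℝ) (x y : Fin n → ℝ) :
    ∑ i, ∑ k, (Matrix.diagonal d i k - x i * y k)^2
    = (∑ i, d i ^2) - 2 * (∑ i, d i * (x i * y i)) + (∑ i, x i ^2) * (∑ i, y i ^2) := by
  have hterm : ∀ i k : Fin n, (Matrix.diagonal d i k - x i * y k)^2
      = (Matrix.diagonal d i k)^2 - 2 * (Matrix.diagonal d i k * (x i * y k)) + x i ^2 * y k ^2 := by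
    intro i k; ring
  simp_rw [hterm, Finset.sum_add_distrib, Finset.sum_sub_distrib, ← Finset.mul_sum, sumD2]
  have h2 : ∀ i : Fin n, ∑ k, Matrix.diagonal d i k * (x i * y k) = d i * (x i * y i) := by
    intro i
    rw [Finset.sum_eq_single i]
    · simp [Matrix.diagonal]
    · intro k _ hk; simp [Matrix.diagonal_apply_ne d (Ne.symm hk)]
    · simp
  simp_rw [h2, ← Finset.sum_mul]

lemma valCand {n : ℕ} (d : Fin n → ℝ) (μmax : ℝ) (hμ : 0 ≤ μmax) (i₀ : Fin n) (hi₀ : d i₀ = μmax) :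
    ∑ i, ∑ k, (Matrix.diagonal d i k - (if i = i₀ then Real.sqrt μmax else 0) * (if k = i₀ then Real.sqrt μmax else 0))^2
    = (∑ i, d i ^2) - μmax^2 := by
  have hterm : ∀ i k : Fin n, (Matrix.diagonal d i k - (if i = i₀ then Real.sqrt μmax else 0) * (if k = i₀ then Real.sqrt μmax else 0))^2
      = (Matrix.diagonal d i k)^2 - (if i = i₀ then (if k = i₀ then μmax^2 else 0) else 0) := by
    intro i k
    by_cases h1 : i = i₀
    · by_cases h2 : k = i₀
      · subst h1; subst h2
        rw [if_pos rfl, Matrix.diagonal_apply_eq, hi₀, Real.mul_self_sqrt hμ]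
        simp
      · subst h1
        rw [if_pos rfl, if_neg h2, mul_zero]
        simp [h2]
    · rw [if_neg h1, zero_mul]
      simp [h1]
  have hin : ∀ i : Fin n, ∑ k, (if i = i₀ then (if k = i₀ then μmax^2 else 0) else 0)
      = (if i = i₀ then μmax^2 else 0) := by
    intro i
    split_ifs with hi
    · simp
    · simp
  simp_rw [hterm, Finset.sum_sub_distrib, hin, sumD2]
  simp
lemma charpoly_eval_eq {m : Type*} [Fintype m] [DecidableEq m] {R : Type*} [CommRing R]
    (M : Matrix m m R) (r : R) :
    M.charpoly.eval r = (r • (1 : Matrix m m R) - M).det := by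
  rw [charpoly, eval_det, matPolyEquiv_charmatrix]
  simp [smul_one_eq_diagonal]

lemma root_of_eigen {m : Type*} [Fintype m] [DecidableEq m]
    (M : Matrix m m ℝ) (r : ℝ) (v : m → ℝ) (hv : v ≠ 0) (hMv : M *ᵥ v = r • v) :
    ((M.map (algebraMap ℝ ℂ)).charpoly).IsRoot (r : ℂ) := by
  have h1 : (M.map (algebraMap ℝ ℂ)).charpoly = M.charpoly.map (algebraMap ℝ ℂ) :=
    charpoly_map M _
  have h2 : M.charpoly.eval r = 0 := by
    rw [charpoly_eval_eq]
    rw [← Matrix.exists_mulVec_eq_zero_iff]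
    exact ⟨v, hv, by simp [sub_mulVec, hMv, smul_mulVec]⟩
  rw [IsRoot, h1]
  have : ((r : ℝ) : ℂ) = algebraMap ℝ ℂ r := rfl
  rw [this, eval_map, eval₂_at_apply, h2, map_zero]


/-- Stability implies balancing for rank-1 approximation: if `A = diag d ≥ 0` has
a distinct positive maximal value `μmax` and `(x,y)` is a global minimizer of
`‖A - xyᵀ‖_F²/2` which is a linearly stable fixed point of GD with step `h > 0`
(all eigenvalues of the Jacobian have complex modulus at most `1`), then
`‖x‖² + ‖y‖² ≤ 2/h` and hence `‖x - y‖² ≤ 2/h - 2μmax`. -/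
theorem gd_stability_implies_balancing {n : ℕ} (d : Fin n → ℝ) (hd : ∀ i, 0 ≤ d i)
    (μmax : ℝ) (hμpos : 0 < μmax) (i₀ : Fin n) (hi₀ : d i₀ = μmax)
    (hstrict : ∀ i, i ≠ i₀ → d i < μmax)
    (h : ℝ) (hh : 0 < h) (x y : Fin n → ℝ)
    (hmin : ∀ x' y' : Fin n → ℝ,
      (∑ i, ∑ j, (Matrix.diagonal d i j - x i * y j) ^ 2) / 2 ≤
        (∑ i, ∑ j, (Matrix.diagonal d i j - x' i * y' j) ^ 2) / 2)
    (hstable : ∀ z : ℂ,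
      ((gdJacobian d h x y).map (algebraMap ℝ ℂ)).charpoly.IsRoot z →
        ‖z‖ ≤ 1) :
    (∑ i, x i ^ 2) + (∑ i, y i ^ 2) ≤ 2 / h ∧
    ∑ i, (x i - y i) ^ 2 ≤ 2 / h - 2 * μmax := by
  classical
  set X := ∑ i, x i ^ 2 with hXdef
  set Y := ∑ i, y i ^ 2 with hYdef
  have hX0 : (0:ℝ) ≤ X := Finset.sum_nonneg fun i _ => sq_nonneg _
  have hY0 : (0:ℝ) ≤ Y := Finset.sum_nonneg fun i _ => sq_nonneg _
  -- first order conditions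
  have fo1 : ∀ j, d j * y j = x j * Y := by
    intro j
    have hq : ∀ t : ℝ, 0 ≤ (2 * (x j * Y - d j * y j)) * t + Y * t ^ 2 := by
      intro t
      have hm := hmin (fun i => x i + t * (if i = j then 1 else 0)) y
      simp only [expandA d x y j t, ← hYdef] at hm
      linarith
    have := quad_zero _ _ hY0 hq
    linarith
  have fo2 : ∀ j, d j * x j = y j * X := by
    intro j
    have hq : ∀ t : ℝ, 0 ≤ (2 * (y j * X - d j * x j)) * t + X * t ^ 2 := by
      intro t
      have hm := hmin x (fun k => y k + t * (if k = j then 1 else 0))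
      simp only [expandB d x y j t, ← hXdef] at hm
      linarith
    have := quad_zero _ _ hX0 hq
    linarith
  -- value at the minimizer and comparison with the candidate
  have hc : ∑ i, d i * (x i * y i) = X * Y := by
    have e1 : ∀ i : Fin n, d i * (x i * y i) = x i ^ 2 * Y := by
      intro i
      linear_combination x i * fo1 i
    simp_rw [e1, ← Finset.sum_mul]
    rfl
  have hXYge : μmax ^ 2 ≤ X * Y := by
    have hcand := hmin (fun i => if i = i₀ then Real.sqrt μmax else 0)
      (fun i => if i = i₀ then Real.sqrt μmax else 0)
    simp only [valCand d μmax hμpos.le i₀ hi₀, valF d x y, hc, ← hXdef, ← hYdef] at hcand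
    linarith
  have hXYpos : 0 < X * Y := lt_of_lt_of_le (by positivity) hXYge
  have hXpos : 0 < X := by
    by_contra hcon
    push_neg at hcon
    nlinarith
  have hYpos : 0 < Y := by
    by_contra hcon
    push_neg at hcon
    nlinarith
  have hkey : ∀ j, x j ≠ 0 ∨ y j ≠ 0 → d j ^ 2 = X * Y := by
    intro j hj
    rcases hj with hx | hy
    · have h1 : (d j ^ 2 - X * Y) * x j = 0 := by
        linear_combination d j * fo2 j + X * fo1 j
      rcases mul_eq_zero.mp h1 with h2 | h2
      · linarith
      · exact absurd h2 hx
    · have h1 : (d j ^ 2 - X * Y) * y j = 0 := by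
        linear_combination d j * fo1 j + Y * fo2 j
      rcases mul_eq_zero.mp h1 with h2 | h2
      · linarith
      · exact absurd h2 hy
  have hXYle : X * Y ≤ μmax ^ 2 := by
    obtain ⟨j, hj⟩ : ∃ j, x j ≠ 0 := by
      by_contra hcon
      push_neg at hcon
      have : X = 0 := by
        rw [hXdef]
        exact Finset.sum_eq_zero fun i _ => by rw [hcon i]; ring
      linarith
    have hdj := hkey j (Or.inl hj)
    have hdle : d j ≤ μmax := by
      by_cases hji : j = i₀
      · subst hji; rw [hi₀]
      · exact (hstrict j hji).le
    nlinarith [hd j]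
  have hXY : X * Y = μmax ^ 2 := le_antisymm hXYle hXYge
  have hdeq : ∀ j, x j ≠ 0 ∨ y j ≠ 0 → j = i₀ := by
    intro j hj
    by_contra hji
    have hdj := hkey j hj
    rw [hXY] at hdj
    have h1 : (d j - μmax) * (d j + μmax) = 0 := by linear_combination hdj
    rcases mul_eq_zero.mp h1 with h2 | h2
    · exact absurd (by linarith : d j = μmax) (ne_of_lt (hstrict j hji))
    · nlinarith [hd j]
  have hsupx : ∀ j, j ≠ i₀ → x j = 0 := by
    intro j hj
    by_contra hx
    exact hj (hdeq j (Or.inl hx))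
  have hsupy : ∀ j, j ≠ i₀ → y j = 0 := by
    intro j hj
    by_contra hy
    exact hj (hdeq j (Or.inr hy))
  have hXa : X = x i₀ ^ 2 := by
    rw [hXdef]
    apply Finset.sum_eq_single i₀
    · intro k _ hk; rw [hsupx k hk]; ring
    · intro hk; exact absurd (Finset.mem_univ i₀) hk
  have hYb : Y = y i₀ ^ 2 := by
    rw [hYdef]
    apply Finset.sum_eq_single i₀
    · intro k _ hk; rw [hsupy k hk]; ring
    · intro hk; exact absurd (Finset.mem_univ i₀) hk
  have ha0 : x i₀ ≠ 0 := by
    intro h0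
    rw [hXa, h0] at hXpos
    norm_num at hXpos
  have hb0 : y i₀ ≠ 0 := by
    intro h0
    rw [hYb, h0] at hYpos
    norm_num at hYpos
  have hab : x i₀ * y i₀ = μmax := by
    have e1 := fo1 i₀
    rw [hi₀, hYb] at e1
    have : μmax * y i₀ = (x i₀ * y i₀) * y i₀ := by rw [e1]; ring
    exact (mul_right_cancel₀ hb0 this).symm
  have hsum_xy : ∑ i, x i * y i = μmax := by
    rw [← hab]
    apply Finset.sum_eq_single i₀
    · intro k _ hk; rw [hsupx k hk]; ring
    · intro hk; exact absurd (Finset.mem_univ i₀) hk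
  have hsum_yx : ∑ i, y i * x i = μmax := by
    rw [← hsum_xy]
    exact Finset.sum_congr rfl fun i _ => mul_comm _ _
  have hdx : ∀ i, d i * x i = X * y i := by
    intro i
    by_cases hi : i = i₀
    · subst hi; rw [hi₀, hXa, ← hab]; ring
    · rw [hsupx i hi, hsupy i hi]; ring
  have hdy : ∀ i, d i * y i = Y * x i := by
    intro i
    by_cases hi : i = i₀
    · subst hi; rw [hi₀, hYb, ← hab]; ring
    · rw [hsupx i hi, hsupy i hi]; ring
  have hμx : ∀ i, μmax * x i = X * y i := by
    intro i
    by_cases hi : i = i₀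
    · subst hi; rw [hXa, ← hab]; ring
    · rw [hsupx i hi, hsupy i hi]; ring
  have hμy : ∀ i, μmax * y i = Y * x i := by
    intro i
    by_cases hi : i = i₀
    · subst hi; rw [hYb, ← hab]; ring
    · rw [hsupx i hi, hsupy i hi]; ring
  -- the eigenvector computation
  have hvv1 : (Matrix.vecMulVec x y) *ᵥ x = fun i => μmax * x i := by
    funext i
    simp only [Matrix.mulVec, Matrix.vecMulVec_apply, dotProduct]
    calc ∑ j, x i * y j * x j = x i * ∑ j, y j * x j := by
          rw [Finset.mul_sum]; exact Finset.sum_congr rfl fun j _ => by ring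
      _ = μmax * x i := by rw [hsum_yx]; ring
  have hvv2 : (Matrix.vecMulVec y x) *ᵥ y = fun i => μmax * y i := by
    funext i
    simp only [Matrix.mulVec, Matrix.vecMulVec_apply, dotProduct]
    calc ∑ j, y i * x j * y j = y i * ∑ j, x j * y j := by
          rw [Finset.mul_sum]; exact Finset.sum_congr rfl fun j _ => by ring
      _ = μmax * y i := by rw [hsum_xy]; ring
  have htop : ((-(h * Y)) • (1 : Matrix (Fin n) (Fin n) ℝ)) *ᵥ y
      + (h • Matrix.diagonal d - (2 * h) • Matrix.vecMulVec x y) *ᵥ x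
      = fun i => (-(h * (X + Y))) * y i := by
    funext i
    rw [Pi.add_apply, smul_mulVec, one_mulVec, sub_mulVec, smul_mulVec,
      smul_mulVec, hvv1]
    simp only [Pi.smul_apply, Pi.sub_apply, smul_eq_mul, Matrix.mulVec_diagonal]
    rw [hdx i, hμx i]
    ring
  have hbot : (h • (Matrix.diagonal d)ᵀ - (2 * h) • Matrix.vecMulVec y x) *ᵥ y
      + ((-(h * X)) • (1 : Matrix (Fin n) (Fin n) ℝ)) *ᵥ x
      = fun i => (-(h * (X + Y))) * x i := by
    funext i
    rw [Matrix.diagonal_transpose, Pi.add_apply, smul_mulVec, one_mulVec, sub_mulVec,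
      smul_mulVec, smul_mulVec, hvv2]
    simp only [Pi.smul_apply, Pi.sub_apply, smul_eq_mul, Matrix.mulVec_diagonal]
    rw [hdy i, hμy i]
    ring
  have heig : gdJacobian d h x y *ᵥ (Sum.elim y x)
      = (1 - h * (X + Y)) • (Sum.elim y x) := by
    unfold gdJacobian
    rw [← hXdef, ← hYdef, add_mulVec, one_mulVec, fromBlocks_mulVec,
      Sum.elim_comp_inl, Sum.elim_comp_inr, htop, hbot]
    funext s
    rcases s with i | i
    · simp only [Pi.add_apply, Sum.elim_inl, Pi.smul_apply, smul_eq_mul]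
      ring
    · simp only [Pi.add_apply, Sum.elim_inr, Pi.smul_apply, smul_eq_mul]
      ring
  have hvne : (Sum.elim y x : Fin n ⊕ Fin n → ℝ) ≠ 0 := by
    intro h0
    exact ha0 (by simpa using congrFun h0 (Sum.inr i₀))
  have hroot := root_of_eigen _ _ _ hvne heig
  have habs := hstable _ hroot
  rw [Complex.norm_real, Real.norm_eq_abs] at habs
  have hineq := (abs_le.mp habs).1
  have hs : h * (X + Y) ≤ 2 := by linarith
  have part1 : X + Y ≤ 2 / h := by
    rw [le_div_iff₀ hh]
    nlinarith
  refine ⟨part1, ?_⟩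
  have hexp : ∑ i, (x i - y i) ^ 2 = X + Y - 2 * μmax := by
    have e1 : ∀ i : Fin n, (x i - y i) ^ 2 = x i ^ 2 + y i ^ 2 - 2 * (x i * y i) := by
      intro i; ring
    simp_rw [e1]
    rw [Finset.sum_sub_distrib, Finset.sum_add_distrib, ← Finset.mul_sum, hsum_xy,
      ← hXdef, ← hYdef]
  rw [hexp]
  linarith
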